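/- arXiv:1108.5634 — 5 statements merged into one kernel-verified Lean document; each statement's English description precedes it below -/
import Mathlib

section
/- Let (Ω, μ) be a measure space, let g : Ω → [0,∞] be measurable with ∫_Ω g dμ < ∞, let w : Ω → [0,∞) be measurable, and let A ≥ 0. Then the following are equivalent: (i) for every real σ > 0, ∫_Ω w(x)^σ g(x) dμ(x) ≤ A^σ ∫_Ω g(x) dμ(x); (ii) g = 0 μ-almost everywhere on the set {x ∈ Ω : w(x) > A}. -/
open MeasureTheory Filter Topology
open scoped ENNReal

/-- Plancherel-side content of Theorem 3.1: the family of Bernstein inequalities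
`∫ w^σ g ≤ A^σ ∫ g` for all `σ > 0` holds if and only if `g` vanishes a.e. on the set
where `w > A`. -/
theorem bernstein_iff_bandlimited {Ω : Type*} [MeasurableSpace Ω] (μ : Measure Ω)
    (g : Ω → ℝ≥0∞) (hg : Measurable g) (hgint : ∫⁻ x, g x ∂μ < ⊤)
    (w : Ω → ℝ) (hw : Measurable w) (hw0 : ∀ x, 0 ≤ w x)
    (A : ℝ) (hA : 0 ≤ A) :
    (∀ σ : ℝ, 0 < σ →
        ∫⁻ x, ENNReal.ofReal (w x ^ σ) * g x ∂μ ≤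
          ENNReal.ofReal (A ^ σ) * ∫⁻ x, g x ∂μ) ↔
      (∀ᵐ x ∂μ, A < w x → g x = 0) := by
  set I := ∫⁻ x, g x ∂μ with hIdef
  constructor
  · intro h
    have key : ∀ n : ℕ, ∀ᵐ x ∂μ, A + 1/((n:ℝ)+1) ≤ w x → g x = 0 := by
      intro n
      set ε : ℝ := 1/((n:ℝ)+1) with hεdef
      have hε : 0 < ε := by positivity
      set S : Set Ω := {x | A + ε ≤ w x} with hSdef
      have hS : MeasurableSet S := measurableSet_le measurable_const hw
      set r : ℝ := A / (A + ε) with hrdef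
      have hAε : 0 < A + ε := by linarith
      have hr : r < 1 := by
        rw [hrdef, div_lt_one hAε]; linarith
      have hr0 : 0 ≤ r := by positivity
      have hbound : ∀ σ : ℝ, 0 < σ →
          ∫⁻ x in S, g x ∂μ ≤ ENNReal.ofReal (r ^ σ) * I := by
        intro σ hσ
        have ha0 : ENNReal.ofReal ((A+ε)^σ) ≠ 0 := by
          simp [ENNReal.ofReal_eq_zero, not_le]
          positivity
        have hatop : ENNReal.ofReal ((A+ε)^σ) ≠ ⊤ := ENNReal.ofReal_ne_top
        rw [← ENNReal.mul_le_mul_iff_right ha0 hatop, ← mul_assoc, ← ENNReal.ofReal_mul (by positivity),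
          ← Real.mul_rpow hAε.le hr0, mul_div_cancel₀ _ hAε.ne']
        calc ENNReal.ofReal ((A+ε)^σ) * ∫⁻ x in S, g x ∂μ
            = ∫⁻ x in S, ENNReal.ofReal ((A+ε)^σ) * g x ∂μ :=
              (lintegral_const_mul _ hg).symm
          _ ≤ ∫⁻ x in S, ENNReal.ofReal (w x ^ σ) * g x ∂μ := by
              refine setLIntegral_mono ((ENNReal.measurable_ofReal.comp
                (hw.pow_const σ)).mul hg) ?_
              intro x hx
              exact mul_le_mul_left
                (ENNReal.ofReal_le_ofReal (Real.rpow_le_rpow hAε.le hx hσ.le)) _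
          _ ≤ ∫⁻ x, ENNReal.ofReal (w x ^ σ) * g x ∂μ := setLIntegral_le_lintegral _ _
          _ ≤ ENNReal.ofReal (A ^ σ) * I := h σ hσ
      have hJ : ∫⁻ x in S, g x ∂μ = 0 := by
        refine le_antisymm ?_ (zero_le)
        have htend : Tendsto (fun n : ℕ => ENNReal.ofReal (r ^ ((n:ℝ)+1)) * I)
            atTop (𝓝 0) := by
          have h1 : Tendsto (fun n : ℕ => r ^ ((n:ℝ)+1)) atTop (𝓝 0) := by
            have := tendsto_pow_atTop_nhds_zero_of_lt_one hr0 hr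
            have h2 : Tendsto (fun n : ℕ => r ^ (n+1)) atTop (𝓝 0) :=
              this.comp (tendsto_add_atTop_nat 1)
            refine h2.congr fun n => ?_
            rw [← Real.rpow_natCast r (n+1)]
            push_cast; ring_nf
          have h3 : Tendsto (fun n : ℕ => ENNReal.ofReal (r ^ ((n:ℝ)+1)))
              atTop (𝓝 0) := by
            simpa [Function.comp_def] using (ENNReal.continuous_ofReal.tendsto 0).comp h1
          simpa using ENNReal.Tendsto.mul_const h3 (Or.inr hgint.ne)
        refine ge_of_tendsto htend ?_
        filter_upwards with n
        exact hbound ((n:ℝ)+1) (by positivity)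
      have := (setLIntegral_eq_zero_iff hS hg).mp hJ
      exact this
    have hall := ae_all_iff.mpr key
    filter_upwards [hall] with x hx hAx
    obtain ⟨n, hn⟩ := exists_nat_one_div_lt (show (0:ℝ) < w x - A by linarith)
    exact hx n (by linarith)
  · intro h σ hσ
    calc ∫⁻ x, ENNReal.ofReal (w x ^ σ) * g x ∂μ
        ≤ ∫⁻ x, ENNReal.ofReal (A ^ σ) * g x ∂μ := by
          refine lintegral_mono_ae ?_
          filter_upwards [h] with x hx
          by_cases hxA : w x ≤ A
          · exact mul_le_mul_left
              (ENNReal.ofReal_le_ofReal (Real.rpow_le_rpow (hw0 x) hxA hσ.le)) _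
          · simp [hx (not_le.mp hxA)]
      _ = ENNReal.ofReal (A ^ σ) * I := lintegral_const_mul _ hg
end

section
/- Let (Ω, μ) be a measure space, let g, h : Ω → [0,∞) be measurable, let a > 0 and let s ≥ 0 be real. Assume ∫_Ω g dμ < ∞ and ∫_Ω h^{s+1} g dμ < ∞. If ∫_Ω g dμ ≤ a ∫_Ω h g dμ, then ∫_Ω h^s g dμ ≤ a ∫_Ω h^{s+1} g dμ. -/
open MeasureTheory
open scoped ENNReal NNReal

lemma aux_real (t s : ℝ) (ht : 0 ≤ t) (hs : 0 ≤ s) :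
    t ^ s + t ≤ t ^ (s + 1) + 1 := by
  rcases eq_or_lt_of_le ht with h0 | h0
  · have h1 : (0:ℝ) ^ s ≤ 1 := by
      rcases eq_or_lt_of_le hs with h | h
      · rw [← h, Real.rpow_zero]
      · rw [Real.zero_rpow h.ne']; norm_num
    have h2 : (0:ℝ) ^ (s+1) = 0 := Real.zero_rpow (by linarith)
    rw [← h0]; rw [h2]; linarith
  · have hst : t ^ (s + 1) = t ^ s * t := by
      rw [Real.rpow_add h0, Real.rpow_one]
    rcases le_total t 1 with h1 | h1
    · have : t ^ s ≤ 1 := Real.rpow_le_one ht h1 hs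
      nlinarith [Real.rpow_nonneg ht s]
    · have : 1 ≤ t ^ s := Real.one_le_rpow h1 hs
      nlinarith

lemma aux_enn (t : ℝ≥0∞) (s : ℝ) (ht : t ≠ ⊤) (hs : 0 ≤ s) :
    t ^ s + t ≤ t ^ (s + 1) + 1 := by
  have hts : t ^ s ≠ ⊤ := by
    simp [ENNReal.rpow_eq_top_iff, ht, not_lt.mpr hs]
  have hts1 : t ^ (s+1) ≠ ⊤ := by
    simp [ENNReal.rpow_eq_top_iff, ht]
    intro _; linarith
  rw [← ENNReal.toReal_le_toReal (by simp [hts, ht]) (by simp [hts1]),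
    ENNReal.toReal_add hts ht, ENNReal.toReal_add hts1 (by simp),
    ← ENNReal.toReal_rpow, ← ENNReal.toReal_rpow]
  simpa using aux_real t.toReal s ENNReal.toReal_nonneg hs

/-- Key step of Lemma 6.2: if `∫ g ≤ a ∫ h g`, then for every `s ≥ 0`
`∫ h^s g ≤ a ∫ h^{s+1} g`. -/
theorem lintegral_rpow_mul_le_of_le {Ω : Type*} [MeasurableSpace Ω] (μ : Measure Ω)
    (g h : Ω → ℝ≥0) (hgm : Measurable g) (hhm : Measurable h)
    (a : ℝ) (ha : 0 < a) (s : ℝ) (hs : 0 ≤ s)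
    (hgint : ∫⁻ x, (g x : ℝ≥0∞) ∂μ < ⊤)
    (hint : ∫⁻ x, (h x : ℝ≥0∞) ^ (s + 1) * g x ∂μ < ⊤)
    (hyp : ∫⁻ x, (g x : ℝ≥0∞) ∂μ ≤ ENNReal.ofReal a * ∫⁻ x, (h x : ℝ≥0∞) * g x ∂μ) :
    ∫⁻ x, (h x : ℝ≥0∞) ^ s * g x ∂μ ≤
      ENNReal.ofReal a * ∫⁻ x, (h x : ℝ≥0∞) ^ (s + 1) * g x ∂μ := by
  set A : ℝ≥0∞ := ENNReal.ofReal a with hA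
  have hA0 : A ≠ 0 := (ENNReal.ofReal_pos.mpr ha).ne'
  have hAt : A ≠ ⊤ := ENNReal.ofReal_ne_top
  have hge : Measurable fun x => (g x : ℝ≥0∞) := hgm.coe_nnreal_ennreal
  have hhe : Measurable fun x => (h x : ℝ≥0∞) := hhm.coe_nnreal_ennreal
  have hms : ∀ r : ℝ, Measurable fun x => (h x : ℝ≥0∞) ^ r * g x := fun r =>
    (hhe.pow_const r).mul hge
  have hhfin : ∀ x, (A * (h x : ℝ≥0∞)) ≠ ⊤ := fun x =>
    ENNReal.mul_ne_top hAt ENNReal.coe_ne_top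
  -- finiteness of ∫ h g
  have hI1 : ∫⁻ x, (h x : ℝ≥0∞) * g x ∂μ < ⊤ := by
    have hle : ∀ x, (h x : ℝ≥0∞) * g x ≤ (h x : ℝ≥0∞) ^ (s+1) * g x + g x := by
      intro x
      have := aux_enn (h x : ℝ≥0∞) s ENNReal.coe_ne_top hs
      have h2 : (h x : ℝ≥0∞) ≤ (h x : ℝ≥0∞) ^ (s+1) + 1 :=
        le_trans (le_add_self) this
      calc (h x : ℝ≥0∞) * g x ≤ ((h x : ℝ≥0∞) ^ (s+1) + 1) * g x :=
            mul_le_mul_left h2 _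
        _ = (h x : ℝ≥0∞) ^ (s+1) * g x + g x := by ring
    calc ∫⁻ x, (h x : ℝ≥0∞) * g x ∂μ
        ≤ ∫⁻ x, ((h x : ℝ≥0∞) ^ (s+1) * g x + g x) ∂μ := lintegral_mono hle
      _ = (∫⁻ x, (h x : ℝ≥0∞) ^ (s+1) * g x ∂μ) + ∫⁻ x, (g x : ℝ≥0∞) ∂μ :=
          lintegral_add_left (hms (s+1)) _
      _ < ⊤ := ENNReal.add_lt_top.mpr ⟨hint, hgint⟩
  -- main pointwise inequality, integrated
  have key : ∫⁻ x, ((A * h x) ^ s * g x + (A * h x) * g x) ∂μ ≤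
      ∫⁻ x, ((A * h x) ^ (s+1) * g x + g x) ∂μ := by
    refine lintegral_mono fun x => ?_
    have := aux_enn (A * h x) s (hhfin x) hs
    calc (A * h x) ^ s * g x + (A * h x) * g x
        = ((A * h x) ^ s + A * h x) * g x := by ring
      _ ≤ ((A * h x) ^ (s+1) + 1) * g x := mul_le_mul_left this _
      _ = (A * h x) ^ (s+1) * g x + g x := by ring
  -- rewrite integrals
  have rw1 : ∀ r : ℝ, 0 ≤ r → (∫⁻ x, (A * h x) ^ r * g x ∂μ) =
      A ^ r * ∫⁻ x, (h x : ℝ≥0∞) ^ r * g x ∂μ := by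
    intro r hr
    rw [← lintegral_const_mul _ (hms r)]
    refine lintegral_congr fun x => ?_
    rw [ENNReal.mul_rpow_of_nonneg _ _ hr, mul_assoc]
  have rw2 : (∫⁻ x, (A * h x) * g x ∂μ) = A * ∫⁻ x, (h x : ℝ≥0∞) * g x ∂μ := by
    rw [← lintegral_const_mul _ (f := fun x => (h x : ℝ≥0∞) * g x) (hhe.mul hge)]
    refine lintegral_congr fun x => ?_
    ring
  have mAs : ∀ r : ℝ, Measurable fun x => (A * h x) ^ r * g x := fun r =>
    (((measurable_const.mul hhe).pow_const r).mul hge)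
  rw [lintegral_add_left (mAs s), lintegral_add_left (mAs (s+1)),
    rw1 s hs, rw1 (s+1) (by linarith), rw2] at key
  have key2 : A ^ s * (∫⁻ x, (h x : ℝ≥0∞) ^ s * g x ∂μ) +
      A * ∫⁻ x, (h x : ℝ≥0∞) * g x ∂μ ≤
      A ^ (s+1) * (∫⁻ x, (h x : ℝ≥0∞) ^ (s+1) * g x ∂μ) +
      A * ∫⁻ x, (h x : ℝ≥0∞) * g x ∂μ :=
    key.trans (add_le_add_right hyp _)
  have key3 := (ENNReal.add_le_add_iff_right (ENNReal.mul_ne_top hAt hI1.ne)).mp key2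
  have hAs0 : A ^ s ≠ 0 := by simp [ENNReal.rpow_eq_zero_iff, hA0, hAt]
  have hAst : A ^ s ≠ ⊤ := by
    simp [ENNReal.rpow_eq_top_iff, hA0, hAt]
  rw [ENNReal.rpow_add s 1 hA0 hAt, ENNReal.rpow_one, mul_assoc] at key3
  exact (ENNReal.mul_le_mul_iff_right hAs0 hAst).mp key3
end

section
/- Let (Ω, μ) be a measure space, let g, h : Ω → [0,∞) be measurable, let a > 0, σ > 0, s ≥ 0 be real, let l be a natural number and put m = 2^l. Assume ∫_Ω g dμ < ∞ and ∫_Ω h^{mσ+s} g dμ < ∞. If ∫_Ω g dμ ≤ a ∫_Ω h^σ g dμ, then ∫_Ω h^s g dμ ≤ a^m ∫_Ω h^{mσ+s} g dμ. -/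
open MeasureTheory
open scoped ENNReal NNReal

/-- Log-convexity (Hölder interpolation): `J t * J σ ≤ J 0 * J (t+σ)`. -/
lemma lintegral_rpow_mul_interp {Ω : Type*} [MeasurableSpace Ω] (μ : Measure Ω)
    (g h : Ω → ℝ≥0) (hgm : Measurable g) (hhm : Measurable h)
    {t σ : ℝ} (ht : 0 < t) (hσ : 0 < σ) :
    (∫⁻ x, (h x : ℝ≥0∞) ^ t * g x ∂μ) * (∫⁻ x, (h x : ℝ≥0∞) ^ σ * g x ∂μ) ≤
      (∫⁻ x, (g x : ℝ≥0∞) ∂μ) * (∫⁻ x, (h x : ℝ≥0∞) ^ (t + σ) * g x ∂μ) := by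
  set p : ℝ := (t + σ) / t with hp
  set q : ℝ := (t + σ) / σ with hq
  have htσ : 0 < t + σ := by linarith
  have hpq : p.HolderConjugate q := by
    rw [Real.holderConjugate_iff]; constructor
    · rw [hp, lt_div_iff₀ ht]; linarith
    · rw [hp, hq]; field_simp
  have hp0 : 0 < p := hpq.pos
  have hq0 : 0 < q := hpq.symm.pos
  have hFm : AEMeasurable (fun x => ((h x : ℝ≥0∞) ^ (t + σ) * g x)) μ :=
    ((hhm.coe_nnreal_ennreal.pow_const _).mul hgm.coe_nnreal_ennreal).aemeasurable
  have hGm : AEMeasurable (fun x => ((g x : ℝ≥0∞))) μ := hgm.coe_nnreal_ennreal.aemeasurable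
  -- first Hölder: J t ≤ J(t+σ)^(1/p) * J0^(1/q)
  have holder : ∀ (u v : ℝ), u.HolderConjugate v →
      (∫⁻ x, (h x : ℝ≥0∞) ^ ((t + σ)/u) * g x ∂μ) ≤
        (∫⁻ x, (h x : ℝ≥0∞) ^ (t + σ) * g x ∂μ) ^ (1/u) *
          (∫⁻ x, (g x : ℝ≥0∞) ∂μ) ^ (1/v) := by
    intro u v huv
    have h1 := ENNReal.lintegral_mul_le_Lp_mul_Lq μ huv
      (f := fun x => ((h x : ℝ≥0∞) ^ (t + σ) * g x) ^ (1/u))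
      (g := fun x => ((g x : ℝ≥0∞)) ^ (1/v))
      (hFm.pow_const _) (hGm.pow_const _)
    have hu0 : 0 < u := huv.pos
    have hv0 : 0 < v := huv.symm.pos
    have hsum' : (1:ℝ)/u + 1/v = 1 := by
      rw [one_div, one_div]; exact huv.inv_add_inv_eq_one
    calc (∫⁻ x, (h x : ℝ≥0∞) ^ ((t + σ)/u) * g x ∂μ)
        = ∫⁻ x, (((fun x => ((h x : ℝ≥0∞) ^ (t + σ) * g x) ^ (1/u)) *
            (fun x => ((g x : ℝ≥0∞)) ^ (1/v))) x) ∂μ := by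
          apply lintegral_congr; intro x
          simp only [Pi.mul_apply]
          rw [ENNReal.mul_rpow_of_nonneg _ _ (by positivity : (0:ℝ) ≤ 1/u),
            ← ENNReal.rpow_mul, mul_assoc,
            ← ENNReal.rpow_add_of_nonneg _ _ (by positivity) (by positivity),
            hsum', ENNReal.rpow_one, mul_one_div]
      _ ≤ (∫⁻ x, (((h x : ℝ≥0∞) ^ (t + σ) * g x) ^ (1/u)) ^ u ∂μ) ^ (1/u) *
            (∫⁻ x, (((g x : ℝ≥0∞)) ^ (1/v)) ^ v ∂μ) ^ (1/v) := h1
      _ = (∫⁻ x, (h x : ℝ≥0∞) ^ (t + σ) * g x ∂μ) ^ (1/u) *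
            (∫⁻ x, (g x : ℝ≥0∞) ∂μ) ^ (1/v) := by
          congr 1 <;> [skip; skip] <;> congr 1 <;> apply lintegral_congr <;> intro x <;>
            rw [← ENNReal.rpow_mul]
          · rw [one_div, inv_mul_cancel₀ hu0.ne', ENNReal.rpow_one]
          · rw [one_div, inv_mul_cancel₀ hv0.ne', ENNReal.rpow_one]
  have e1 : (t + σ)/p = t := by rw [hp]; field_simp
  have e2 : (t + σ)/q = σ := by rw [hq]; field_simp
  have H1 := holder p q hpq
  have H2 := holder q p hpq.symm
  rw [e1] at H1
  rw [e2] at H2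
  calc (∫⁻ x, (h x : ℝ≥0∞) ^ t * g x ∂μ) * (∫⁻ x, (h x : ℝ≥0∞) ^ σ * g x ∂μ)
      ≤ ((∫⁻ x, (h x : ℝ≥0∞) ^ (t + σ) * g x ∂μ) ^ (1/p) *
          (∫⁻ x, (g x : ℝ≥0∞) ∂μ) ^ (1/q)) *
        ((∫⁻ x, (h x : ℝ≥0∞) ^ (t + σ) * g x ∂μ) ^ (1/q) *
          (∫⁻ x, (g x : ℝ≥0∞) ∂μ) ^ (1/p)) := mul_le_mul' H1 H2
    _ = (∫⁻ x, (g x : ℝ≥0∞) ∂μ) * (∫⁻ x, (h x : ℝ≥0∞) ^ (t + σ) * g x ∂μ) := by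
        have hsum : (1:ℝ)/p + 1/q = 1 := by
          rw [one_div, one_div]; exact hpq.inv_add_inv_eq_one
        rw [mul_mul_mul_comm, ← ENNReal.rpow_add_of_nonneg _ _ (by positivity) (by positivity),
          ← ENNReal.rpow_add_of_nonneg _ _ (by positivity) (by positivity), hsum,
          add_comm (1/q) (1/p), hsum, ENNReal.rpow_one, ENNReal.rpow_one, mul_comm]

/-- Plancherel-side form of Lemma 6.2: if `∫ g ≤ a ∫ h^σ g`, then for every `s ≥ 0`
and `m = 2^l` one has `∫ h^s g ≤ a^m ∫ h^{mσ+s} g`. -/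
theorem lintegral_rpow_mul_le_pow_of_le {Ω : Type*} [MeasurableSpace Ω] (μ : Measure Ω)
    (g h : Ω → ℝ≥0) (hgm : Measurable g) (hhm : Measurable h)
    (a : ℝ) (ha : 0 < a) (σ : ℝ) (hσ : 0 < σ) (s : ℝ) (hs : 0 ≤ s)
    (l : ℕ) (m : ℕ) (hm : m = 2 ^ l)
    (hgint : ∫⁻ x, (g x : ℝ≥0∞) ∂μ < ⊤)
    (hint : ∫⁻ x, (h x : ℝ≥0∞) ^ ((m : ℝ) * σ + s) * g x ∂μ < ⊤)
    (hyp : ∫⁻ x, (g x : ℝ≥0∞) ∂μ ≤ ENNReal.ofReal a * ∫⁻ x, (h x : ℝ≥0∞) ^ σ * g x ∂μ) :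
    ∫⁻ x, (h x : ℝ≥0∞) ^ s * g x ∂μ ≤
      ENNReal.ofReal a ^ m * ∫⁻ x, (h x : ℝ≥0∞) ^ ((m : ℝ) * σ + s) * g x ∂μ := by
  have hm1 : 1 ≤ m := by rw [hm]; exact Nat.one_le_two_pow
  have hm1' : (1:ℝ) ≤ (m:ℝ) := by exact_mod_cast hm1
  -- Case: ∫ h^σ g = 0
  by_cases hJσ0 : ∫⁻ x, (h x : ℝ≥0∞) ^ σ * g x ∂μ = 0
  · have hJ0 : ∫⁻ x, (g x : ℝ≥0∞) ∂μ = 0 := by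
      rw [hJσ0, mul_zero] at hyp; exact le_antisymm hyp zero_le
    have hg0 : (fun x => (g x : ℝ≥0∞)) =ᵐ[μ] 0 :=
      (lintegral_eq_zero_iff hgm.coe_nnreal_ennreal).mp hJ0
    have : ∫⁻ x, (h x : ℝ≥0∞) ^ s * g x ∂μ = 0 := by
      rw [lintegral_eq_zero_iff (f := fun x => (h x : ℝ≥0∞) ^ s * g x) ((hhm.coe_nnreal_ennreal.pow_const _).mul
        hgm.coe_nnreal_ennreal)]
      filter_upwards [hg0] with x hx
      simp only [Pi.zero_apply] at hx ⊢
      rw [hx, mul_zero]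
    rw [this]; exact zero_le
  -- ∫ h^σ g < ∞
  have hJσtop : ∫⁻ x, (h x : ℝ≥0∞) ^ σ * g x ∂μ ≠ ⊤ := by
    have hσle : σ ≤ (m:ℝ) * σ + s := by nlinarith
    have hle : ∀ x, (h x : ℝ≥0∞) ^ σ * g x ≤
        g x + (h x : ℝ≥0∞) ^ ((m:ℝ) * σ + s) * g x := by
      intro x
      have h1 : (h x : ℝ≥0∞) ^ σ ≤ 1 + (h x : ℝ≥0∞) ^ ((m:ℝ) * σ + s) := by
        rcases le_or_gt ((h x : ℝ≥0∞)) 1 with hx1 | hx1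
        · exact (ENNReal.rpow_le_one hx1 hσ.le).trans (self_le_add_right _ _)
        · exact (ENNReal.rpow_le_rpow_of_exponent_le hx1.le hσle).trans (le_add_self)
      calc (h x : ℝ≥0∞) ^ σ * g x
          ≤ (1 + (h x : ℝ≥0∞) ^ ((m:ℝ) * σ + s)) * g x := by gcongr
        _ = g x + (h x : ℝ≥0∞) ^ ((m:ℝ) * σ + s) * g x := by rw [add_mul, one_mul]
    have := lintegral_mono (μ := μ) hle
    rw [lintegral_add_left hgm.coe_nnreal_ennreal] at this
    exact ne_top_of_le_ne_top (by exact ENNReal.add_ne_top.mpr ⟨hgint.ne, hint.ne⟩) this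
  -- step: for all t ≥ 0, J t ≤ a * J (t + σ)
  have step : ∀ t : ℝ, 0 ≤ t →
      ∫⁻ x, (h x : ℝ≥0∞) ^ t * g x ∂μ ≤
        ENNReal.ofReal a * ∫⁻ x, (h x : ℝ≥0∞) ^ (t + σ) * g x ∂μ := by
    intro t ht
    rcases eq_or_lt_of_le ht with ht0 | ht0
    · subst ht0
      simpa using hyp
    · have H := lintegral_rpow_mul_interp μ g h hgm hhm ht0 hσ
      have H2 : (∫⁻ x, (h x : ℝ≥0∞) ^ t * g x ∂μ) * (∫⁻ x, (h x : ℝ≥0∞) ^ σ * g x ∂μ) ≤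
          (ENNReal.ofReal a * ∫⁻ x, (h x : ℝ≥0∞) ^ (t + σ) * g x ∂μ) *
            (∫⁻ x, (h x : ℝ≥0∞) ^ σ * g x ∂μ) := by
        calc _ ≤ _ := H
          _ ≤ (ENNReal.ofReal a * ∫⁻ x, (h x : ℝ≥0∞) ^ σ * g x ∂μ) *
              (∫⁻ x, (h x : ℝ≥0∞) ^ (t + σ) * g x ∂μ) := by gcongr
          _ = _ := by ring
      exact (ENNReal.mul_le_mul_iff_left hJσ0 hJσtop).mp H2
  -- induction
  have main : ∀ n : ℕ, ∫⁻ x, (h x : ℝ≥0∞) ^ s * g x ∂μ ≤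
      ENNReal.ofReal a ^ n * ∫⁻ x, (h x : ℝ≥0∞) ^ ((n : ℝ) * σ + s) * g x ∂μ := by
    intro n
    induction n with
    | zero => simp
    | succ n ih =>
      have hns : 0 ≤ (n:ℝ) * σ + s := by positivity
      calc ∫⁻ x, (h x : ℝ≥0∞) ^ s * g x ∂μ
          ≤ ENNReal.ofReal a ^ n * ∫⁻ x, (h x : ℝ≥0∞) ^ ((n : ℝ) * σ + s) * g x ∂μ := ih
        _ ≤ ENNReal.ofReal a ^ n * (ENNReal.ofReal a *
            ∫⁻ x, (h x : ℝ≥0∞) ^ (((n : ℝ) * σ + s) + σ) * g x ∂μ) := by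
            gcongr; exact step _ hns
        _ = ENNReal.ofReal a ^ (n + 1) *
            ∫⁻ x, (h x : ℝ≥0∞) ^ (((n:ℕ) + 1 : ℝ) * σ + s) * g x ∂μ := by
            rw [← mul_assoc, ← pow_succ]
            congr 1
            apply lintegral_congr; intro x
            congr 2
            ring
        _ = _ := by norm_num
  exact main m
end

section
/- Let τ > 0 and E > 0. Let S : ℝ → ℝ be continuous on [0, τ], positive on (0, τ], and nondecreasing on [0, τ]. Let Φ : ℝ → ℂ be continuous on [0, τ] with Φ(0) = 1 and |Φ(t)| ≤ 1 for all t ∈ [0, τ], differentiable on (0, τ), and suppose that for every σ ∈ (0, τ), S(σ) Φ′(σ) = −E ∫₀^σ S(γ) Φ(γ) dγ. Then |1 − Φ(τ)| ≤ E τ² / 2. -/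
open MeasureTheory intervalIntegral Set

/-- The analytic heart of Theorem 7.3 (estimate (7.7)): if `Φ` is a radial
eigenfunction-type profile, i.e. `Φ 0 = 1`, `|Φ| ≤ 1` on `[0, τ]`, and
`S σ * Φ' σ = -E ∫₀^σ S γ * Φ γ dγ` on `(0, τ)` for a continuous, positive,
nondecreasing surface-area function `S`, then `|1 - Φ τ| ≤ E τ² / 2`. -/
theorem radial_eigenfunction_estimate (τ E : ℝ) (hτ : 0 < τ) (hE : 0 < E)
    (S : ℝ → ℝ) (hScont : ContinuousOn S (Icc 0 τ))
    (hSpos : ∀ t ∈ Ioc 0 τ, 0 < S t) (hSmono : MonotoneOn S (Icc 0 τ))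
    (Φ : ℝ → ℂ) (hΦcont : ContinuousOn Φ (Icc 0 τ))
    (hΦ0 : Φ 0 = 1) (hΦle : ∀ t ∈ Icc 0 τ, ‖Φ t‖ ≤ 1)
    (hΦdiff : ∀ σ ∈ Ioo 0 τ, DifferentiableAt ℝ Φ σ)
    (hODE : ∀ σ ∈ Ioo 0 τ,
      (S σ : ℂ) * deriv Φ σ = -(E : ℂ) * ∫ γ in (0:ℝ)..σ, (S γ : ℂ) * Φ γ) :
    ‖1 - Φ τ‖ ≤ E * τ ^ 2 / 2 := by
  -- Step 1: derivative bound ‖Φ'(σ)‖ ≤ E σ on (0, τ)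
  have hderiv : ∀ σ ∈ Ioo 0 τ, ‖deriv Φ σ‖ ≤ E * σ := by
    intro σ hσ
    have hσ0 : (0:ℝ) < σ := hσ.1
    have hσIcc : Icc (0:ℝ) σ ⊆ Icc 0 τ := Icc_subset_Icc le_rfl hσ.2.le
    have hSσ : 0 < S σ := hSpos σ ⟨hσ0, hσ.2.le⟩
    have hSint : IntervalIntegrable S volume 0 σ :=
      (hScont.mono (by rw [uIcc_of_le hσ0.le]; exact hσIcc)).intervalIntegrable
    have hI : ‖∫ γ in (0:ℝ)..σ, (S γ : ℂ) * Φ γ‖ ≤ σ * S σ := by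
      have h1 : ‖∫ γ in (0:ℝ)..σ, (S γ : ℂ) * Φ γ‖ ≤ |∫ γ in (0:ℝ)..σ, S γ| := by
        refine intervalIntegral.norm_integral_le_abs_of_norm_le ?_ hSint
        rw [uIoc_of_le hσ0.le]
        filter_upwards [ae_restrict_mem measurableSet_Ioc] with γ hγ
        have hSγ : 0 < S γ := hSpos γ ⟨hγ.1, hγ.2.trans hσ.2.le⟩
        have : ‖(S γ : ℂ) * Φ γ‖ = S γ * ‖Φ γ‖ := by
          rw [norm_mul, Complex.norm_real, Real.norm_eq_abs, abs_of_pos hSγ]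
        rw [this]
        calc S γ * ‖Φ γ‖ ≤ S γ * 1 := by
              exact mul_le_mul_of_nonneg_left
                (hΦle γ ⟨hγ.1.le, hγ.2.trans hσ.2.le⟩) hSγ.le
          _ = S γ := mul_one _
      have hnn : 0 ≤ ∫ γ in (0:ℝ)..σ, S γ := by
        refine intervalIntegral.integral_nonneg_of_ae_restrict hσ0.le ?_
        have hmem : ∀ᵐ γ ∂volume.restrict (Icc 0 σ), γ ∈ Ioc (0:ℝ) σ := by
          rw [← Measure.restrict_congr_set Ioc_ae_eq_Icc]
          exact ae_restrict_mem measurableSet_Ioc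
        filter_upwards [hmem] with γ hγ
        exact (hSpos γ ⟨hγ.1, hγ.2.trans hσ.2.le⟩).le
      have h2 : (∫ γ in (0:ℝ)..σ, S γ) ≤ σ * S σ := by
        calc (∫ γ in (0:ℝ)..σ, S γ) ≤ ∫ _γ in (0:ℝ)..σ, S σ := by
              refine intervalIntegral.integral_mono_on hσ0.le hSint
                intervalIntegrable_const ?_
              intro x hx
              exact hSmono (hσIcc hx) ⟨hσ0.le, hσ.2.le⟩ hx.2
          _ = σ * S σ := by simp [mul_comm]
        ;
      calc ‖∫ γ in (0:ℝ)..σ, (S γ : ℂ) * Φ γ‖ ≤ |∫ γ in (0:ℝ)..σ, S γ| := h1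
        _ = ∫ γ in (0:ℝ)..σ, S γ := abs_of_nonneg hnn
        _ ≤ σ * S σ := h2
    have heq : S σ * ‖deriv Φ σ‖ = E * ‖∫ γ in (0:ℝ)..σ, (S γ : ℂ) * Φ γ‖ := by
      have := congrArg norm (hODE σ hσ)
      simpa [norm_mul, Complex.norm_real, Real.norm_eq_abs, abs_of_pos hSσ,
        abs_of_pos hE] using this
    have : S σ * ‖deriv Φ σ‖ ≤ S σ * (E * σ) := by
      rw [heq]
      calc E * ‖∫ γ in (0:ℝ)..σ, (S γ : ℂ) * Φ γ‖ ≤ E * (σ * S σ) :=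
            mul_le_mul_of_nonneg_left hI hE.le
        _ = S σ * (E * σ) := by ring
    exact le_of_mul_le_mul_left this hSσ
  -- Step 2: for 0 < a ≤ b < τ, ‖Φ b - Φ a‖ ≤ E * (b^2 - a^2) / 2
  have key : ∀ a b : ℝ, 0 < a → a ≤ b → b < τ → ‖Φ b - Φ a‖ ≤ E * (b ^ 2 - a ^ 2) / 2 := by
    intro a b ha hab hb
    have hsub : Icc a b ⊆ Icc 0 τ := Icc_subset_Icc ha.le hb.le
    have hf : ContinuousOn (fun x => Φ x - Φ a) (Icc a b) :=
      (hΦcont.mono hsub).sub continuousOn_const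
    have hf' : ∀ x ∈ Ico a b, HasDerivWithinAt (fun x => Φ x - Φ a) (deriv Φ x) (Ici x) x := by
      intro x hx
      have hxO : x ∈ Ioo 0 τ := ⟨ha.trans_le hx.1, hx.2.trans hb⟩
      exact (((hΦdiff x hxO).hasDerivAt.sub_const (Φ a))).hasDerivWithinAt
    have hB : ∀ x : ℝ, HasDerivAt (fun x => E * (x ^ 2 - a ^ 2) / 2) (E * x) x := by
      intro x
      have h := (((hasDerivAt_pow 2 x).sub_const (a ^ 2)).const_mul E).div_const 2
      refine h.congr_deriv ?_
      simp; ring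
    have bound : ∀ x ∈ Ico a b, ‖deriv Φ x‖ ≤ E * x := fun x hx =>
      hderiv x ⟨ha.trans_le hx.1, hx.2.trans hb⟩
    have := image_norm_le_of_norm_deriv_right_le_deriv_boundary hf hf'
      (by simp [ha.le] : ‖Φ a - Φ a‖ ≤ E * (a ^ 2 - a ^ 2) / 2) hB bound
      (right_mem_Icc.2 hab)
    simpa using this
  -- Step 3: limit as a → 0⁺ of ‖Φ (τ - a) - Φ a‖
  have htend : Filter.Tendsto (fun a => ‖Φ (τ - a) - Φ a‖) (nhdsWithin 0 (Ioo 0 (τ / 2)))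
      (nhds ‖Φ τ - Φ 0‖) := by
    have h1 : Filter.Tendsto Φ (nhdsWithin 0 (Ioo 0 (τ / 2))) (nhds (Φ 0)) := by
      refine (hΦcont 0 ⟨le_rfl, hτ.le⟩).tendsto.comp ?_
      refine tendsto_nhdsWithin_of_tendsto_nhds_of_eventually_within _
        (tendsto_nhdsWithin_of_tendsto_nhds Filter.tendsto_id) ?_
      filter_upwards [self_mem_nhdsWithin] with a ha
      exact ⟨ha.1.le, ha.2.le.trans (by linarith)⟩
    have h2 : Filter.Tendsto (fun a : ℝ => Φ (τ - a)) (nhdsWithin 0 (Ioo 0 (τ / 2)))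
        (nhds (Φ τ)) := by
      refine (hΦcont τ ⟨hτ.le, le_rfl⟩).tendsto.comp ?_
      refine tendsto_nhdsWithin_of_tendsto_nhds_of_eventually_within _ ?_ ?_
      · have : Filter.Tendsto (fun a : ℝ => τ - a) (nhds 0) (nhds τ) := by
          simpa using (tendsto_const_nhds.sub Filter.tendsto_id :
            Filter.Tendsto (fun a : ℝ => τ - a) (nhds 0) (nhds (τ - 0)))
        exact this.mono_left nhdsWithin_le_nhds
      · filter_upwards [self_mem_nhdsWithin] with a ha
        exact ⟨by linarith [ha.2, hτ], by linarith [ha.1]⟩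
    exact (h2.sub h1).norm
  have hbound : ∀ᶠ a in nhdsWithin 0 (Ioo 0 (τ / 2)),
      ‖Φ (τ - a) - Φ a‖ ≤ E * τ ^ 2 / 2 := by
    filter_upwards [self_mem_nhdsWithin] with a ha
    have h1 : ‖Φ (τ - a) - Φ a‖ ≤ E * ((τ - a) ^ 2 - a ^ 2) / 2 :=
      key a (τ - a) ha.1 (by linarith [ha.2]) (by linarith [ha.1])
    have h2 : E * ((τ - a) ^ 2 - a ^ 2) / 2 ≤ E * τ ^ 2 / 2 := by
      have : (τ - a) ^ 2 - a ^ 2 ≤ τ ^ 2 := by nlinarith [ha.1, ha.2, sq_nonneg a]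
      have := mul_le_mul_of_nonneg_left this hE.le
      linarith
    linarith
  haveI hne : (nhdsWithin (0:ℝ) (Ioo 0 (τ / 2))).NeBot :=
    left_nhdsWithin_Ioo_neBot (by linarith)
  have hfin : ‖Φ τ - Φ 0‖ ≤ E * τ ^ 2 / 2 := le_of_tendsto htend hbound
  rw [hΦ0] at hfin
  calc ‖1 - Φ τ‖ = ‖Φ τ - 1‖ := by
        rw [← norm_neg]; ring_nf
    _ ≤ E * τ ^ 2 / 2 := hfin
end

section
/- Let d ≥ 1, let ω > 0, and write B̄(0, ω) for the closed ball of radius ω centered at 0 in ℝ^d. For g ∈ L²(B̄(0, ω)) define e_g : ℝ^d → ℂ by e_g(x) = ∫_{B̄(0,ω)} g(ξ) e^{i⟨x, ξ⟩} dξ (the integral converges absolutely since g ∈ L¹(B̄(0, ω))). Then for every open ball U ⊆ ℝ^d, the set of restrictions {e_g|_U : g ∈ L²(B̄(0, ω))} is dense in L²(U): for every h ∈ L²(U) and every ε > 0 there exists g ∈ L²(B̄(0, ω)) with ∫_U |h(x) − e_g(x)|² dx < ε². -/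
open MeasureTheory Metric Complex
open scoped ENNReal NNReal

namespace BandlimitedAux
set_option maxHeartbeats 1000000

noncomputable section

variable {d : ℕ}

/-- The kernel `e^{i⟨z,y⟩}`. -/
def ker (z y : EuclideanSpace ℝ (Fin d)) : ℂ :=
  Complex.exp (Complex.I * ((inner ℝ z y : ℝ) : ℂ))

lemma norm_ker (z y : EuclideanSpace ℝ (Fin d)) : ‖ker z y‖ = 1 := by
  simp [ker, Complex.norm_exp, Complex.mul_re]

lemma ker_comm (z y : EuclideanSpace ℝ (Fin d)) : ker z y = ker y z := by
  simp [ker, real_inner_comm z y]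

lemma ker_add_right (z y₁ y₂ : EuclideanSpace ℝ (Fin d)) :
    ker z (y₁ + y₂) = ker z y₁ * ker z y₂ := by
  simp [ker, inner_add_right, ← Complex.exp_add, Complex.ofReal_add, mul_add]

lemma ker_zero_right (z : EuclideanSpace ℝ (Fin d)) : ker z 0 = 1 := by
  simp [ker]

lemma conj_ker (z y : EuclideanSpace ℝ (Fin d)) :
    (starRingEnd ℂ) (ker z y) = ker z (-y) := by
  rw [ker, ker, ← Complex.exp_conj, map_mul, Complex.conj_I, Complex.conj_ofReal,
    inner_neg_right]
  push_cast
  ring_nf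

lemma continuous_ker_prod :
    Continuous fun p : EuclideanSpace ℝ (Fin d) × EuclideanSpace ℝ (Fin d) =>
      ker p.1 p.2 := by
  have h1 : Continuous fun p : EuclideanSpace ℝ (Fin d) × EuclideanSpace ℝ (Fin d) =>
      (inner ℝ p.1 p.2 : ℝ) := continuous_inner
  exact Complex.continuous_exp.comp <|
    continuous_const.mul (Complex.continuous_ofReal.comp h1)

lemma continuous_ker_left (y : EuclideanSpace ℝ (Fin d)) :
    Continuous fun z => ker z y := by
  have h1 : Continuous fun z : EuclideanSpace ℝ (Fin d) => (inner ℝ z y : ℝ) :=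
    continuous_id.inner continuous_const
  exact Complex.continuous_exp.comp (continuous_const.mul
    (Complex.continuous_ofReal.comp h1))

lemma continuous_ker_right (z : EuclideanSpace ℝ (Fin d)) :
    Continuous fun y => ker z y := by
  have h1 : Continuous fun y : EuclideanSpace ℝ (Fin d) => (inner ℝ z y : ℝ) :=
    continuous_const.inner continuous_id
  exact Complex.continuous_exp.comp (continuous_const.mul
    (Complex.continuous_ofReal.comp h1))

lemma integrable_mul_ker {μ : Measure (EuclideanSpace ℝ (Fin d))}
    {f : EuclideanSpace ℝ (Fin d) → ℂ} (hf : Integrable f μ)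
    (y : EuclideanSpace ℝ (Fin d)) : Integrable (fun z => f z * ker z y) μ :=
  hf.norm.mono' (hf.aestronglyMeasurable.mul
      (continuous_ker_left y).aestronglyMeasurable)
    (Filter.Eventually.of_forall fun z => by
      rw [norm_mul, norm_ker, mul_one])

/-- The basic integral transform. -/
def T (s : Set (EuclideanSpace ℝ (Fin d))) (f : EuclideanSpace ℝ (Fin d) → ℂ)
    (y : EuclideanSpace ℝ (Fin d)) : ℂ :=
  ∫ z in s, f z * ker z y

lemma norm_T_le (s : Set (EuclideanSpace ℝ (Fin d)))
    (f : EuclideanSpace ℝ (Fin d) → ℂ) (y : EuclideanSpace ℝ (Fin d)) :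
    ‖T s f y‖ ≤ ∫ z in s, ‖f z‖ := by
  refine (norm_integral_le_integral_norm _).trans (le_of_eq ?_)
  refine integral_congr_ae (Filter.Eventually.of_forall fun z => ?_)
  show ‖f z * ker z y‖ = ‖f z‖
  rw [norm_mul, norm_ker, mul_one]

lemma T_continuous {s : Set (EuclideanSpace ℝ (Fin d))}
    {f : EuclideanSpace ℝ (Fin d) → ℂ} (hf : Integrable f (volume.restrict s)) :
    Continuous (T s f) := by
  refine continuous_of_dominated (fun y => (integrable_mul_ker hf y).aestronglyMeasurable)
    (fun y => Filter.Eventually.of_forall fun z => ?_) hf.norm ?_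
  · rw [norm_mul, norm_ker, mul_one]
  · exact Filter.Eventually.of_forall fun z =>
      continuous_const.mul (continuous_ker_right z)

lemma T_memℒp {s t : Set (EuclideanSpace ℝ (Fin d))}
    {f : EuclideanSpace ℝ (Fin d) → ℂ} (hf : Integrable f (volume.restrict s))
    [IsFiniteMeasure (volume.restrict t)] :
    MemLp (T s f) 2 (volume.restrict t) :=
  MemLp.of_bound (T_continuous hf).aestronglyMeasurable (∫ z in s, ‖f z‖)
    (Filter.Eventually.of_forall fun y => norm_T_le s f y)

lemma T_add {s : Set (EuclideanSpace ℝ (Fin d))}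
    {f g : EuclideanSpace ℝ (Fin d) → ℂ} (hf : Integrable f (volume.restrict s))
    (hg : Integrable g (volume.restrict s)) (y : EuclideanSpace ℝ (Fin d)) :
    T s (f + g) y = T s f y + T s g y := by
  unfold T
  rw [← integral_add (integrable_mul_ker hf y) (integrable_mul_ker hg y)]
  refine integral_congr_ae (Filter.Eventually.of_forall fun z => ?_)
  simp [add_mul]

lemma T_smul {s : Set (EuclideanSpace ℝ (Fin d))}
    (f : EuclideanSpace ℝ (Fin d) → ℂ) (c : ℂ) (y : EuclideanSpace ℝ (Fin d)) :
    T s (c • f) y = c * T s f y := by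
  unfold T
  simp only [Pi.smul_apply, smul_eq_mul, mul_assoc, integral_const_mul]

lemma T_zero (s : Set (EuclideanSpace ℝ (Fin d))) (y : EuclideanSpace ℝ (Fin d)) :
    T s (0 : EuclideanSpace ℝ (Fin d) → ℂ) y = 0 := by
  unfold T; simp


/-- If a power series with uniformly bounded coefficients sums to `0` for all small
positive `t`, then all coefficients vanish. -/
lemma coeff_zero (c : ℕ → ℂ) (M : ℝ) (hM : ∀ n, ‖c n‖ ≤ M) {δ : ℝ} (hδ : 0 < δ)
    (h0 : ∀ t : ℝ, 0 < t → t < δ → HasSum (fun n => c n * (t : ℂ) ^ n) 0) :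
    ∀ n, c n = 0 := by
  have hM0 : 0 ≤ M := le_trans (norm_nonneg _) (hM 0)
  intro n
  induction n using Nat.strong_induction_on with
  | _ n IH =>
  have key : ∀ t : ℝ, 0 < t → t < min δ 2⁻¹ → ‖c n‖ ≤ 2 * M * t := by
    intro t ht htm
    have htδ : t < δ := lt_of_lt_of_le htm (min_le_left _ _)
    have ht2 : t ≤ 2⁻¹ := le_of_lt (lt_of_lt_of_le htm (min_le_right _ _))
    have ht1 : t < 1 := lt_of_le_of_lt ht2 (by norm_num)
    have hs := h0 t ht htδ
    have hsum := hs.summable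
    have hsplit := Summable.sum_add_tsum_nat_add (f := fun i => c i * (t : ℂ) ^ i) (n + 1) hsum
    rw [hs.tsum_eq] at hsplit
    have hfin : ∑ i ∈ Finset.range (n + 1), c i * (t : ℂ) ^ i = c n * (t : ℂ) ^ n := by
      rw [Finset.sum_range_succ, Finset.sum_eq_zero, zero_add]
      intro i hi
      rw [IH i (Finset.mem_range.mp hi), zero_mul]
    rw [hfin] at hsplit
    -- `c n * t ^ n = - tail`
    have htail : c n * (t : ℂ) ^ n = -∑' i, c (i + (n + 1)) * (t : ℂ) ^ (i + (n + 1)) := by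
      linear_combination hsplit
    -- summability of the geometric bound
    have hgeo : Summable fun i : ℕ => M * t ^ (n + 1) * t ^ i :=
      (summable_geometric_of_lt_one ht.le ht1).mul_left _
    have htailsum : Summable fun i => c (i + (n + 1)) * (t : ℂ) ^ (i + (n + 1)) :=
      (summable_nat_add_iff (f := fun i => c i * (t : ℂ) ^ i) (n+1)).mpr hsum
    have hbound : ∀ i, ‖c (i + (n + 1)) * (t : ℂ) ^ (i + (n + 1))‖ ≤ M * t ^ (n + 1) * t ^ i := by
      intro i
      rw [norm_mul, norm_pow, Complex.norm_real, Real.norm_eq_abs, abs_of_pos ht]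
      calc ‖c (i + (n + 1))‖ * t ^ (i + (n + 1)) ≤ M * t ^ (i + (n + 1)) := by
            exact mul_le_mul_of_nonneg_right (hM _) (pow_nonneg ht.le _)
        _ = M * t ^ (n + 1) * t ^ i := by rw [pow_add]; ring
    have hnormtail : ‖∑' i, c (i + (n + 1)) * (t : ℂ) ^ (i + (n + 1))‖
        ≤ M * t ^ (n + 1) * (1 - t)⁻¹ := by
      calc ‖∑' i, c (i + (n + 1)) * (t : ℂ) ^ (i + (n + 1))‖
          ≤ ∑' i, (M * t ^ (n + 1) * t ^ i) := by
            refine (norm_tsum_le_tsum_norm htailsum.norm).trans ?_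
            exact Summable.tsum_le_tsum hbound htailsum.norm hgeo
        _ = M * t ^ (n + 1) * (1 - t)⁻¹ := by
            rw [tsum_mul_left, tsum_geometric_of_lt_one ht.le ht1]
    have h1t : (1 - t)⁻¹ ≤ 2 := by
      rw [inv_le_comm₀ (by linarith) (by norm_num)]
      linarith
    have hfinal : ‖c n‖ * t ^ n ≤ 2 * M * t * t ^ n := by
      calc ‖c n‖ * t ^ n = ‖c n * (t : ℂ) ^ n‖ := by
            rw [norm_mul, norm_pow, Complex.norm_real, Real.norm_eq_abs, abs_of_pos ht]
        _ = ‖∑' i, c (i + (n + 1)) * (t : ℂ) ^ (i + (n + 1))‖ := by rw [htail, norm_neg]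
        _ ≤ M * t ^ (n + 1) * (1 - t)⁻¹ := hnormtail
        _ ≤ M * t ^ (n + 1) * 2 :=
            mul_le_mul_of_nonneg_left h1t (by positivity)
        _ = 2 * M * t * t ^ n := by ring
    exact le_of_mul_le_mul_right hfinal (pow_pos ht n)
  -- conclude `c n = 0`
  by_contra hne
  have hpos : 0 < ‖c n‖ := norm_pos_iff.mpr hne
  set t := min (min δ 2⁻¹ / 2) (‖c n‖ / (2 * (2 * M + 1))) with htdef
  have ht0 : 0 < t := by
    apply lt_min
    · positivity
    · positivity
  have htlt : t < min δ 2⁻¹ := lt_of_le_of_lt (min_le_left _ _) (by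
    have : 0 < min δ 2⁻¹ := lt_min hδ (by norm_num)
    linarith)
  have hk := key t ht0 htlt
  have h2 : 2 * M * t ≤ 2 * M * (‖c n‖ / (2 * (2 * M + 1))) :=
    mul_le_mul_of_nonneg_left (min_le_right _ _) (by positivity)
  have h3 : 2 * M * (‖c n‖ / (2 * (2 * M + 1))) < ‖c n‖ := by
    rw [div_eq_inv_mul]
    have hlt : 2 * M < 2 * (2 * M + 1) := by linarith
    calc 2 * M * ((2 * (2 * M + 1))⁻¹ * ‖c n‖)
        = (2 * M / (2 * (2 * M + 1))) * ‖c n‖ := by ring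
      _ < 1 * ‖c n‖ := by
          refine mul_lt_mul_of_pos_right ?_ hpos
          rw [div_lt_one (by positivity)]
          exact hlt
      _ = ‖c n‖ := one_mul _
  linarith


/-- If `T s φ` vanishes near `0`, it vanishes identically (bandlimited extension). -/
lemma T_extend_zero {s : Set (EuclideanSpace ℝ (Fin d))} (hs : MeasurableSet s)
    {K : ℝ} (hK0 : 0 ≤ K) (hK : ∀ z ∈ s, ‖z‖ ≤ K)
    {φ : EuclideanSpace ℝ (Fin d) → ℂ} (hφ : Integrable φ (volume.restrict s))
    {δ : ℝ} (hδ : 0 < δ) (h0 : ∀ η : EuclideanSpace ℝ (Fin d), ‖η‖ < δ → T s φ η = 0) :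
    ∀ ξ : EuclideanSpace ℝ (Fin d), T s φ ξ = 0 := by
  intro ξ
  set μ := volume.restrict s with hμ
  set A := ∫ z in s, ‖φ z‖ with hA
  have hA0 : 0 ≤ A := integral_nonneg fun z => norm_nonneg _
  have hae : ∀ᵐ z ∂μ, ‖z‖ ≤ K := by
    filter_upwards [ae_restrict_mem hs] with z hz using hK z hz
  -- the coefficient integrands
  set f : EuclideanSpace ℝ (Fin d) → ℕ → EuclideanSpace ℝ (Fin d) → ℂ :=
    fun η n z => φ z * ((Complex.I * ((inner ℝ z η : ℝ) : ℂ)) ^ n / (n.factorial : ℂ))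
    with hf
  have hmeas : ∀ η n, AEStronglyMeasurable (f η n) μ := by
    intro η n
    refine hφ.aestronglyMeasurable.mul (Continuous.aestronglyMeasurable ?_)
    have h1 : Continuous fun z : EuclideanSpace ℝ (Fin d) => (inner ℝ z η : ℝ) :=
      continuous_id.inner continuous_const
    exact (((continuous_const.mul (Complex.continuous_ofReal.comp h1)).pow n).div_const _)
  have hb : ∀ η n, ∀ᵐ z ∂μ, ‖f η n z‖ ≤ ‖φ z‖ * ((K * ‖η‖) ^ n / n.factorial) := by
    intro η n
    filter_upwards [hae] with z hz
    rw [hf]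
    simp only [norm_mul, norm_div, norm_pow, Complex.norm_natCast, Complex.norm_I,
      Complex.norm_real, Real.norm_eq_abs, one_mul]
    have hr : |(inner ℝ z η : ℝ)| ≤ K * ‖η‖ :=
      (abs_real_inner_le_norm z η).trans (mul_le_mul_of_nonneg_right hz (norm_nonneg _))
    gcongr
  have hint : ∀ η n, Integrable (f η n) μ := fun η n =>
    ((hφ.norm.mul_const _)).mono' (hmeas η n) (hb η n)
  have hIntNorm : ∀ η n, (∫ z, ‖f η n z‖ ∂μ) ≤ A * ((K * ‖η‖) ^ n / n.factorial) := by
    intro η n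
    calc (∫ z, ‖f η n z‖ ∂μ)
        ≤ ∫ z, ‖φ z‖ * ((K * ‖η‖) ^ n / n.factorial) ∂μ :=
          integral_mono_of_nonneg (Filter.Eventually.of_forall fun z => norm_nonneg _)
            (hφ.norm.mul_const _) (hb η n)
      _ = A * ((K * ‖η‖) ^ n / n.factorial) := integral_mul_const _ _
  have hSummable : ∀ η : EuclideanSpace ℝ (Fin d),
      Summable fun n => ∫ z, ‖f η n z‖ ∂μ := by
    intro η
    refine Summable.of_nonneg_of_le (fun n => integral_nonneg fun z => norm_nonneg _)
      (hIntNorm η) ?_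
    exact (Real.summable_pow_div_factorial (K * ‖η‖)).mul_left A
  -- the exponential series identity
  have hexp : ∀ w : ℂ, HasSum (fun n => w ^ n / (n.factorial : ℂ)) (Complex.exp w) := by
    intro w
    rw [Complex.exp_eq_exp_ℂ]
    exact NormedSpace.expSeries_div_hasSum_exp w
  have hHasSum : ∀ η : EuclideanSpace ℝ (Fin d),
      HasSum (fun n => ∫ z, f η n z ∂μ) (T s φ η) := by
    intro η
    have h := hasSum_integral_of_summable_integral_norm (hint η) (hSummable η)
    have heq : (∫ z, (∑' n, f η n z) ∂μ) = T s φ η := by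
      refine integral_congr_ae (Filter.Eventually.of_forall fun z => ?_)
      rw [hf]
      show ∑' n, φ z * ((Complex.I * ((inner ℝ z η : ℝ) : ℂ)) ^ n / (n.factorial : ℂ))
          = φ z * ker z η
      rw [tsum_mul_left, (hexp _).tsum_eq, ker]
    rwa [heq] at h
  -- scaling
  set c : ℕ → ℂ := fun n => ∫ z, f ξ n z ∂μ with hc
  have hscale : ∀ (t : ℝ) (n : ℕ), (∫ z, f (t • ξ) n z ∂μ) = c n * (t : ℂ) ^ n := by
    intro t n
    rw [hc]
    rw [← integral_mul_const]
    refine integral_congr_ae (Filter.Eventually.of_forall fun z => ?_)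
    rw [hf]
    show φ z * ((Complex.I * ((inner ℝ z (t • ξ) : ℝ) : ℂ)) ^ n / (n.factorial : ℂ))
        = φ z * ((Complex.I * ((inner ℝ z ξ : ℝ) : ℂ)) ^ n / (n.factorial : ℂ)) * (t : ℂ) ^ n
    rw [real_inner_smul_right]
    push_cast
    ring
  have hc_sum : ∀ t : ℝ, HasSum (fun n => c n * (t : ℂ) ^ n) (T s φ (t • ξ)) := by
    intro t
    have h := hHasSum (t • ξ)
    have : (fun n => ∫ z, f (t • ξ) n z ∂μ) = fun n => c n * (t : ℂ) ^ n :=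
      funext fun n => hscale t n
    rwa [this] at h
  -- uniform bound on the coefficients
  have hcM : ∀ n, ‖c n‖ ≤ A * Real.exp (K * ‖ξ‖) := by
    intro n
    have h1 : ‖c n‖ ≤ A * ((K * ‖ξ‖) ^ n / n.factorial) :=
      (norm_integral_le_integral_norm _).trans (hIntNorm ξ n)
    refine h1.trans (mul_le_mul_of_nonneg_left ?_ hA0)
    have hExp : HasSum (fun n => (K * ‖ξ‖) ^ n / (n.factorial : ℝ)) (Real.exp (K * ‖ξ‖)) := by
      rw [Real.exp_eq_exp_ℝ]
      exact NormedSpace.expSeries_div_hasSum_exp _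
    exact le_hasSum hExp n fun j _ => by positivity
  -- coefficients vanish
  have hczero : ∀ n, c n = 0 := by
    refine coeff_zero c (A * Real.exp (K * ‖ξ‖)) hcM
      (δ := δ / (‖ξ‖ + 1)) (by positivity) ?_
    intro t ht htδ
    have hnorm : ‖t • ξ‖ < δ := by
      rw [norm_smul, Real.norm_eq_abs, abs_of_pos ht]
      calc t * ‖ξ‖ ≤ t * (‖ξ‖ + 1) := by nlinarith [norm_nonneg ξ]
        _ < δ := by
          rw [← lt_div_iff₀ (by positivity)] at *
          linarith [htδ]
    have := hc_sum t
    rwa [h0 _ hnorm] at this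
  -- conclude
  have h1 := hc_sum 1
  simp only [hczero, zero_mul] at h1
  have h2 : T s φ ((1 : ℝ) • ξ) = 0 := h1.unique hasSum_zero
  rwa [one_smul] at h2


/-- Stone-Weierstrass approximation by finite combinations of the characters `ker · ξ`,
uniformly on a closed ball. -/
lemma exists_char_approx (x₀ : EuclideanSpace ℝ (Fin d)) (R : ℝ)
    (w : EuclideanSpace ℝ (Fin d) → ℂ) (hw : Continuous w) {δ' : ℝ} (hδ' : 0 < δ') :
    ∃ c : EuclideanSpace ℝ (Fin d) →₀ ℂ, ∀ x ∈ closedBall x₀ R,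
      ‖w x - ∑ ξ ∈ c.support, c ξ * ker x ξ‖ ≤ δ' := by
  haveI : CompactSpace (closedBall x₀ R) :=
    isCompact_iff_compactSpace.mp (isCompact_closedBall x₀ R)
  set X := closedBall x₀ R with hX
  -- the characters as continuous maps on the closed ball
  set char : EuclideanSpace ℝ (Fin d) → C(X, ℂ) :=
    fun ξ => ⟨fun z => ker (z : EuclideanSpace ℝ (Fin d)) ξ,
      (continuous_ker_left ξ).comp continuous_subtype_val⟩ with hchar
  have char_mul : ∀ ξ η, char ξ * char η = char (ξ + η) := by
    intro ξ η
    ext z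
    exact (ker_add_right (z : EuclideanSpace ℝ (Fin d)) ξ η).symm
  have char_zero : char 0 = 1 := by
    ext z
    exact ker_zero_right _
  have char_star : ∀ ξ, star (char ξ) = char (-ξ) := by
    intro ξ
    ext z
    exact conj_ker _ _
  set A := StarAlgebra.adjoin ℂ (Set.range char) with hAdef
  -- every element of `A` is in the linear span of the characters
  have hspan : ∀ a ∈ A, a ∈ Submodule.span ℂ (Set.range char) := by
    intro a ha
    induction ha using StarAlgebra.adjoin_induction with
    | mem x hx => exact Submodule.subset_span hx
    | algebraMap r =>
        rw [Algebra.algebraMap_eq_smul_one, ← char_zero]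
        exact Submodule.smul_mem _ _ (Submodule.subset_span ⟨0, rfl⟩)
    | add x y hx hy ihx ihy => exact Submodule.add_mem _ ihx ihy
    | mul x y hx hy ihx ihy =>
        have hmm := Submodule.mul_mem_mul ihx ihy
        rw [Submodule.span_mul_span] at hmm
        refine Submodule.span_mono ?_ hmm
        rintro z hz
        rw [Set.mem_mul] at hz
        obtain ⟨u, ⟨ξ, rfl⟩, v, ⟨η, rfl⟩, rfl⟩ := hz
        exact ⟨ξ + η, (char_mul ξ η).symm⟩
    | star x hx ihx =>
        clear hx
        induction ihx using Submodule.span_induction with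
        | mem u hu =>
            obtain ⟨ξ, rfl⟩ := hu
            rw [char_star]
            exact Submodule.subset_span ⟨-ξ, rfl⟩
        | zero => rw [star_zero]; exact Submodule.zero_mem _
        | add u v hu hv ihu ihv => rw [star_add]; exact Submodule.add_mem _ ihu ihv
        | smul r u hu ihu => rw [star_smul]; exact Submodule.smul_mem _ _ ihu
  -- the algebra separates points
  have sep : A.SeparatesPoints := by
    intro x y hxy
    have hxy' : (x : EuclideanSpace ℝ (Fin d)) ≠ (y : EuclideanSpace ℝ (Fin d)) :=
      fun hc => hxy (Subtype.ext hc)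
    set v := (x : EuclideanSpace ℝ (Fin d)) - y with hv
    have hv0 : v ≠ 0 := sub_ne_zero.mpr hxy'
    have hvne : ‖v‖ ≠ 0 := norm_ne_zero_iff.mpr hv0
    have hnv : (0:ℝ) < ‖v‖ ^ 2 := by positivity
    set ξ := (Real.pi / ‖v‖ ^ 2) • v with hξ
    refine ⟨char ξ, ⟨char ξ, StarAlgebra.subset_adjoin ℂ _ ⟨ξ, rfl⟩, rfl⟩, ?_⟩
    -- the two inner products differ by π
    have hdiff : (inner ℝ (x : EuclideanSpace ℝ (Fin d)) ξ : ℝ)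
        - (inner ℝ (y : EuclideanSpace ℝ (Fin d)) ξ : ℝ) = Real.pi := by
      rw [← inner_sub_left, ← hv, hξ, real_inner_smul_right, real_inner_self_eq_norm_sq]
      field_simp
    intro hcon
    -- `hcon : ker x ξ = ker y ξ`
    have : Complex.exp (Complex.I * ((inner ℝ (x : EuclideanSpace ℝ (Fin d)) ξ : ℝ) : ℂ))
        = Complex.exp (Complex.I * ((inner ℝ (y : EuclideanSpace ℝ (Fin d)) ξ : ℝ) : ℂ)) := hcon
    rw [Complex.exp_eq_exp_iff_exists_int] at this
    obtain ⟨n, hn⟩ := this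
    set a := (inner ℝ (x : EuclideanSpace ℝ (Fin d)) ξ : ℝ)
    set b := (inner ℝ (y : EuclideanSpace ℝ (Fin d)) ξ : ℝ)
    have hab : (a : ℂ) = (b : ℂ) + n * (2 * Real.pi) := by
      have hI : (Complex.I * a - Complex.I * b) = n * (2 * ↑Real.pi * Complex.I) := by
        rw [hn]; ring
      have h2 : Complex.I * ((a : ℂ) - b - n * (2 * Real.pi)) = 0 := by
        rw [mul_sub, mul_sub, hI]; ring
      rcases mul_eq_zero.mp h2 with h | h
      · exact absurd h Complex.I_ne_zero
      · linear_combination h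
    have habr : a = b + n * (2 * Real.pi) := by exact_mod_cast hab
    have hpin : Real.pi = n * (2 * Real.pi) := by linear_combination habr - hdiff
    have hpi := Real.pi_ne_zero
    have h1 : Real.pi * 1 = Real.pi * (2 * n) := by linear_combination hpin
    have h2n : (1:ℝ) = 2 * n := mul_left_cancel₀ hpi h1
    have : (1 : ℤ) = 2 * n := by exact_mod_cast h2n
    omega
  have hA : A.topologicalClosure = ⊤ :=
    ContinuousMap.starSubalgebra_topologicalClosure_eq_top_of_separatesPoints A sep
  -- approximate `w` on the closed ball
  set wX : C(X, ℂ) := ⟨fun z => w (z : EuclideanSpace ℝ (Fin d)),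
    hw.comp continuous_subtype_val⟩ with hwX
  have h1 : wX ∈ A.topologicalClosure := by rw [hA]; exact StarSubalgebra.mem_top
  have h2 : wX ∈ closure (A : Set C(X, ℂ)) := h1
  obtain ⟨b, hbA, hbdist⟩ := Metric.mem_closure_iff.mp h2 δ' hδ'
  obtain ⟨c, hc⟩ := Finsupp.mem_span_range_iff_exists_finsupp.mp (hspan b hbA)
  refine ⟨c, fun x hx => ?_⟩
  have hbx : b ⟨x, hx⟩ = ∑ ξ ∈ c.support, c ξ * ker x ξ := by
    rw [← hc]
    rw [Finsupp.sum]
    rw [ContinuousMap.coe_sum]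
    simp only [Finset.sum_apply, ContinuousMap.coe_smul, Pi.smul_apply, smul_eq_mul]
    rfl
  calc ‖w x - ∑ ξ ∈ c.support, c ξ * ker x ξ‖
      = dist (wX ⟨x, hx⟩) (b ⟨x, hx⟩) := by rw [dist_eq_norm, hbx]; rfl
    _ ≤ dist wX b := ContinuousMap.dist_apply_le_dist _
    _ ≤ δ' := le_of_lt hbdist


lemma half_bound {a e : ℝ} (ha : 0 ≤ a) (he : 0 < e) :
    a * (e / (2 * (a + 1))) ≤ e / 2 := by
  have h1 : a / (a + 1) ≤ 1 := by
    rw [div_le_one (by positivity)]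
    linarith
  have heq : a * (e / (2 * (a + 1))) = (a / (a + 1)) * (e / 2) := by
    rw [mul_comm 2 (a + 1), ← mul_div_assoc, div_mul_div_comm, mul_comm a e, mul_comm (a+1) 2]
  rw [heq]
  calc (a / (a + 1)) * (e / 2) ≤ 1 * (e / 2) :=
        mul_le_mul_of_nonneg_right h1 (by positivity)
    _ = e / 2 := one_mul _

/-- The key duality statement: if `ψf ∈ L²(ball x₀ R)` is orthogonal to all band-limited
functions `T (closedBall 0 ω) g`, then `ψf = 0` a.e. -/
lemma dual_vanish (ω : ℝ) (hω : 0 < ω) (x₀ : EuclideanSpace ℝ (Fin d)) (R : ℝ) (hR : 0 < R)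
    (ψf : EuclideanSpace ℝ (Fin d) → ℂ)
    (hψ : MemLp ψf 2 (volume.restrict (ball x₀ R)))
    (H : ∀ g : EuclideanSpace ℝ (Fin d) → ℂ,
      MemLp g 2 (volume.restrict (closedBall (0 : EuclideanSpace ℝ (Fin d)) ω)) →
      ∫ x in ball x₀ R, T (closedBall (0 : EuclideanSpace ℝ (Fin d)) ω) g x
        * (starRingEnd ℂ) (ψf x) = 0) :
    ψf =ᵐ[volume.restrict (ball x₀ R)] 0 := by
  set B := closedBall (0 : EuclideanSpace ℝ (Fin d)) ω with hB
  set U := ball x₀ R with hU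
  set μ := volume.restrict U with hμ
  set ν := volume.restrict B with hν
  haveI hfinU : IsFiniteMeasure μ := by
    constructor
    rw [hμ, Measure.restrict_apply_univ]
    exact measure_ball_lt_top
  haveI hfinB : IsFiniteMeasure ν := by
    constructor
    rw [hν, Measure.restrict_apply_univ]
    exact measure_closedBall_lt_top
  set φc : EuclideanSpace ℝ (Fin d) → ℂ := fun x => (starRingEnd ℂ) (ψf x) with hφc
  have hφm : AEStronglyMeasurable φc μ :=
    RCLike.continuous_conj.comp_aestronglyMeasurable hψ.aestronglyMeasurable
  have hφ2 : MemLp φc 2 μ :=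
    hψ.of_le hφm (Filter.Eventually.of_forall fun x => by
      simp [hφc, RCLike.norm_conj])
  have hφ1 : Integrable φc μ := hφ2.integrable one_le_two
  set F := T U φc with hF
  set A := ∫ x in U, ‖φc x‖ with hA
  have hA0 : 0 ≤ A := integral_nonneg fun x => norm_nonneg _
  have Fbdd : ∀ ξ, ‖F ξ‖ ≤ A := fun ξ => norm_T_le U φc ξ
  have Fcont : Continuous F := T_continuous hφ1
  -- Step 1: Fubini
  have step1 : ∀ g : EuclideanSpace ℝ (Fin d) → ℂ, MemLp g 2 ν →
      ∫ ξ in B, g ξ * F ξ = 0 := by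
    intro g hg
    have hg1 : Integrable g ν := hg.integrable one_le_two
    have hH := H g hg
    -- rewrite the integrand of hH as a double integral
    have e1 : ∀ x, T B g x * φc x = ∫ ξ in B, g ξ * φc x * ker ξ x := by
      intro x
      rw [show T B g x = ∫ ξ in B, g ξ * ker ξ x from rfl, ← integral_mul_const]
      refine integral_congr_ae (Filter.Eventually.of_forall fun ξ => ?_)
      show g ξ * ker ξ x * φc x = g ξ * φc x * ker ξ x
      ring
    have hfull : Integrable
        (fun p : EuclideanSpace ℝ (Fin d) × EuclideanSpace ℝ (Fin d) =>
          g p.2 * φc p.1 * ker p.2 p.1) (μ.prod ν) := by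
      have base : Integrable
          (fun p : EuclideanSpace ℝ (Fin d) × EuclideanSpace ℝ (Fin d) =>
            φc p.1 * g p.2) (μ.prod ν) := hφ1.mul_prod hg1
      have contKer : Continuous
          (fun p : EuclideanSpace ℝ (Fin d) × EuclideanSpace ℝ (Fin d) =>
            ker p.2 p.1) := by
        have h1 : Continuous fun p : EuclideanSpace ℝ (Fin d) × EuclideanSpace ℝ (Fin d) =>
            (inner ℝ p.2 p.1 : ℝ) := continuous_snd.inner continuous_fst
        exact Complex.continuous_exp.comp (continuous_const.mul
          (Complex.continuous_ofReal.comp h1))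
      have hfe : (fun p : EuclideanSpace ℝ (Fin d) × EuclideanSpace ℝ (Fin d) =>
          g p.2 * φc p.1 * ker p.2 p.1)
          = fun p => (φc p.1 * g p.2) * ker p.2 p.1 := by
        funext p; ring
      rw [hfe]
      refine base.norm.mono' (base.aestronglyMeasurable.mul contKer.aestronglyMeasurable)
        (Filter.Eventually.of_forall fun p => ?_)
      show ‖φc p.1 * g p.2 * ker p.2 p.1‖ ≤ ‖φc p.1 * g p.2‖
      rw [norm_mul (φc p.1 * g p.2), norm_ker, mul_one]
    have hswap := integral_integral_swap
      (f := fun x ξ => g ξ * φc x * ker ξ x) hfull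
    have e2 : ∫ x, T B g x * φc x ∂μ = ∫ ξ, ∫ x, g ξ * φc x * ker ξ x ∂μ ∂ν := by
      rw [← hswap]
      exact integral_congr_ae (Filter.Eventually.of_forall fun x => e1 x)
    have e3 : ∀ ξ, (∫ x, g ξ * φc x * ker ξ x ∂μ) = g ξ * F ξ := by
      intro ξ
      rw [show F ξ = ∫ x in U, φc x * ker x ξ from rfl]
      rw [← integral_const_mul]
      refine integral_congr_ae (Filter.Eventually.of_forall fun x => ?_)
      show g ξ * φc x * ker ξ x = g ξ * (φc x * ker x ξ)
      rw [ker_comm x ξ]; ring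
    have e4 : ∫ ξ, ∫ x, g ξ * φc x * ker ξ x ∂μ ∂ν = ∫ ξ, g ξ * F ξ ∂ν :=
      integral_congr_ae (Filter.Eventually.of_forall fun ξ => e3 ξ)
    calc ∫ ξ in B, g ξ * F ξ = ∫ x, T B g x * φc x ∂μ := by rw [e2, e4]
      _ = 0 := hH
  -- Step 3: `F` vanishes a.e. on `B`
  have hgF : MemLp (fun ξ => star (F ξ)) 2 ν :=
    MemLp.of_bound (continuous_star.comp Fcont).aestronglyMeasurable A
      (Filter.Eventually.of_forall fun ξ => by
        show ‖star (F ξ)‖ ≤ A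
        rw [norm_star]; exact Fbdd ξ)
  have hFF : ∫ ξ in B, star (F ξ) * F ξ = 0 := step1 _ hgF
  have hpt : ∀ z : ℂ, star z * z = ((‖z‖ ^ 2 : ℝ) : ℂ) := by
    intro z
    rw [show star z = (starRingEnd ℂ) z from rfl, mul_comm, Complex.mul_conj]
    norm_cast
    rw [Complex.normSq_eq_norm_sq]
  have hInt2 : Integrable (fun ξ => ‖F ξ‖ ^ 2) ν := by
    refine memLp_one_iff_integrable.mp (MemLp.of_bound
      ((Fcont.norm.pow 2).aestronglyMeasurable) (A ^ 2)
      (Filter.Eventually.of_forall fun ξ => ?_))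
    show ‖‖F ξ‖ ^ 2‖ ≤ A ^ 2
    rw [Real.norm_of_nonneg (by positivity)]
    exact pow_le_pow_left₀ (norm_nonneg _) (Fbdd ξ) 2
  have hFF2 : (∫ ξ in B, ‖F ξ‖ ^ 2) = 0 := by
    have h1 : ∫ ξ in B, ((‖F ξ‖ ^ 2 : ℝ) : ℂ) = 0 := by
      rw [← hFF]
      exact integral_congr_ae (Filter.Eventually.of_forall fun ξ => (hpt (F ξ)).symm)
    have h3 : Integrable (fun ξ => ((‖F ξ‖ ^ 2 : ℝ) : ℂ)) ν := hInt2.ofReal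
    have h4 : (∫ ξ in B, ‖F ξ‖ ^ 2)
        = RCLike.re (∫ ξ in B, ((‖F ξ‖ ^ 2 : ℝ) : ℂ)) := by
      rw [← integral_re h3]
      refine integral_congr_ae (Filter.Eventually.of_forall fun ξ => ?_)
      exact (RCLike.ofReal_re _).symm
    rw [h4, h1]
    simp
  have hae0 : (fun ξ => ‖F ξ‖ ^ 2) =ᵐ[ν] 0 :=
    (integral_eq_zero_iff_of_nonneg (fun ξ => by positivity) hInt2).mp hFF2
  have hFae : F =ᵐ[ν] 0 := by
    filter_upwards [hae0] with ξ hξ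
    have : ‖F ξ‖ ^ 2 = 0 := hξ
    have h2 : ‖F ξ‖ = 0 := by nlinarith [norm_nonneg (F ξ), sq_nonneg (‖F ξ‖)]
    simpa using norm_eq_zero.mp h2
  -- Step 4: `F` vanishes on the open ball
  have hFball : ∀ η : EuclideanSpace ℝ (Fin d), ‖η‖ < ω → F η = 0 := by
    intro η hη
    by_contra hne
    have hopen : IsOpen {ξ : EuclideanSpace ℝ (Fin d) | F ξ ≠ 0} := by
      have : {ξ : EuclideanSpace ℝ (Fin d) | F ξ ≠ 0} = F ⁻¹' {0}ᶜ := rfl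
      rw [this]
      exact isOpen_compl_singleton.preimage Fcont
    set O := {ξ : EuclideanSpace ℝ (Fin d) | F ξ ≠ 0} ∩ ball (0 : EuclideanSpace ℝ (Fin d)) ω
      with hO
    have hOopen : IsOpen O := hopen.inter isOpen_ball
    have hmem : η ∈ O := ⟨hne, mem_ball_zero_iff.mpr hη⟩
    have hpos : 0 < volume O := hOopen.measure_pos volume ⟨η, hmem⟩
    have hzero : ν {ξ | F ξ ≠ 0} = 0 := by
      have := ae_iff.mp hFae
      simpa using this
    have hO0 : volume O = 0 := by
      have h2 : ν O = volume (O ∩ B) := Measure.restrict_apply hOopen.measurableSet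
      have h3 : O ∩ B = O := by
        apply Set.inter_eq_self_of_subset_left
        refine Set.Subset.trans Set.inter_subset_right ?_
        rw [hB]
        exact ball_subset_closedBall
      rw [h3] at h2
      rw [← h2]
      exact measure_mono_null Set.inter_subset_left hzero
    exact absurd hO0 hpos.ne'
  -- Step 5: `F` vanishes everywhere
  have Fzero : ∀ ξ : EuclideanSpace ℝ (Fin d), F ξ = 0 := by
    refine T_extend_zero measurableSet_ball (K := ‖x₀‖ + R)
      (by positivity) ?_ hφ1 hω ?_
    · intro z hz
      have h1 : dist z x₀ < R := mem_ball.mp hz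
      calc ‖z‖ = ‖x₀ + (z - x₀)‖ := by rw [add_sub_cancel]
        _ ≤ ‖x₀‖ + ‖z - x₀‖ := norm_add_le _ _
        _ ≤ ‖x₀‖ + R := by
            rw [← dist_eq_norm]
            linarith
    · intro η hη
      exact hFball η hη
  -- Step 6: Stone-Weierstrass endgame
  -- the `L²` element associated with `ψf`
  set ψL := hψ.toLp ψf with hψL
  suffices hLzero : ψL = 0 by
    have h1 : ψf =ᵐ[μ] ψL := (hψ.coeFn_toLp).symm
    have h2 : (ψL : EuclideanSpace ℝ (Fin d) → ℂ) =ᵐ[μ] 0 := by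
      rw [hLzero]
      exact Lp.coeFn_zero ℂ 2 μ
    exact h1.trans h2
  -- the indicator extension of ψf
  set Ψ := U.indicator ψf with hΨdef
  have hΨ : MemLp Ψ 2 volume := by
    constructor
    · rw [hΨdef, hU]
      exact (aestronglyMeasurable_indicator_iff measurableSet_ball).mpr
        hψ.aestronglyMeasurable
    · rw [hΨdef, hU, eLpNorm_indicator_eq_eLpNorm_restrict measurableSet_ball]
      exact hψ.2
  have hball_sub : U ⊆ closedBall x₀ R := by rw [hU]; exact ball_subset_closedBall
  -- prove ‖ψL‖² ≤ ε for every positive ε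
  have hsq : ∀ ε : ℝ, 0 < ε → ‖ψL‖ ^ 2 ≤ ε := by
    intro ε hε
    set ε₁ := ε / (2 * (‖ψL‖ + 1)) with hε₁def
    have hε₁ : 0 < ε₁ := by
      rw [hε₁def]
      positivity
    set δ' := ε / (2 * (A + 1)) with hδ'def
    have hδ' : 0 < δ' := by
      rw [hδ'def]
      positivity
    obtain ⟨w, w_cs, w_close, w_cont, w_mem⟩ :=
      hΨ.exists_hasCompactSupport_eLpNorm_sub_le (by norm_num : (2 : ℝ≥0∞) ≠ ⊤)
        (ε := ENNReal.ofReal ε₁) (ENNReal.ofReal_pos.mpr hε₁).ne'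
    have hwU : MemLp w 2 μ := w_mem.restrict _
    set W := hwU.toLp w with hW
    have hdist : ‖ψL - W‖ ≤ ε₁ := by
      have h1 : ‖ψL - W‖ = (eLpNorm (ψf - w) 2 μ).toReal := by
        rw [Lp.norm_def]
        congr 1
        apply eLpNorm_congr_ae
        filter_upwards [Lp.coeFn_sub ψL W, hψ.coeFn_toLp, hwU.coeFn_toLp]
          with x h1 h2 h3
        rw [h1]
        show (ψL : EuclideanSpace ℝ (Fin d) → ℂ) x - (W : EuclideanSpace ℝ (Fin d) → ℂ) x
          = ψf x - w x
        rw [h2, h3]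
      have h2 : eLpNorm (ψf - w) 2 μ = eLpNorm (Ψ - w) 2 μ := by
        apply eLpNorm_congr_ae
        have hmem : ∀ᵐ x ∂μ, x ∈ U := by
          rw [hμ, hU]
          exact ae_restrict_mem measurableSet_ball
        filter_upwards [hmem] with x hx
        show ψf x - w x = Ψ x - w x
        rw [hΨdef, Set.indicator_of_mem hx]
      have h3 : eLpNorm (Ψ - w) 2 μ ≤ ENNReal.ofReal ε₁ := by
        refine le_trans ?_ w_close
        rw [hμ]
        exact eLpNorm_mono_measure _ Measure.restrict_le_self
      rw [h1, h2]
      exact ENNReal.toReal_le_of_le_ofReal hε₁.le h3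
    -- the inner products
    have hinner1 : ‖(inner ℂ ψL (ψL - W) : ℂ)‖ ≤ ‖ψL‖ * ε₁ := by
      refine (norm_inner_le_norm _ _).trans ?_
      exact mul_le_mul_of_nonneg_left hdist (norm_nonneg _)
    have hWint : (inner ℂ ψL W : ℂ) = ∫ x in U, φc x * w x := by
      rw [L2.inner_def]
      refine integral_congr_ae ?_
      filter_upwards [hψ.coeFn_toLp, hwU.coeFn_toLp] with x h2 h3
      rw [RCLike.inner_apply']
      show (starRingEnd ℂ) ((ψL : EuclideanSpace ℝ (Fin d) → ℂ) x)
        * (W : EuclideanSpace ℝ (Fin d) → ℂ) x = φc x * w x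
      rw [h2, h3]
    -- Stone-Weierstrass approximation of w
    obtain ⟨c, hc⟩ := exists_char_approx x₀ R w w_cont hδ'
    set aE : EuclideanSpace ℝ (Fin d) → ℂ := fun x => ∑ ξ ∈ c.support, c ξ * ker x ξ
      with haE
    have hsum_eq : (fun x => φc x * aE x)
        = fun x => ∑ ξ ∈ c.support, c ξ * (φc x * ker x ξ) := by
      funext x
      rw [haE, Finset.mul_sum]
      exact Finset.sum_congr rfl fun ξ _ => by ring
    have hInt_aE : Integrable (fun x => φc x * aE x) μ := by
      rw [hsum_eq]
      exact integrable_finset_sum _ fun ξ _ =>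
        (integrable_mul_ker hφ1 ξ).const_mul (c ξ)
    have hzero_aE : ∫ x in U, φc x * aE x = 0 := by
      rw [hsum_eq, integral_finset_sum _ (fun ξ _ =>
        (integrable_mul_ker hφ1 ξ).const_mul (c ξ))]
      refine Finset.sum_eq_zero fun ξ _ => ?_
      rw [integral_const_mul]
      have : (∫ x, φc x * ker x ξ ∂μ) = F ξ := rfl
      rw [this, Fzero ξ, mul_zero]
    have hIw : Integrable (fun x => φc x * w x) μ := by
      have h0 := L2.integrable_inner (𝕜 := ℂ) ψL W
      refine h0.congr ?_
      filter_upwards [hψ.coeFn_toLp, hwU.coeFn_toLp] with x h2 h3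
      rw [RCLike.inner_apply']
      show (starRingEnd ℂ) ((ψL : EuclideanSpace ℝ (Fin d) → ℂ) x)
        * (W : EuclideanSpace ℝ (Fin d) → ℂ) x = φc x * w x
      rw [h2, h3]
    have hsmall : ‖∫ x in U, φc x * w x‖ ≤ A * δ' := by
      have hsub : Integrable (fun x => φc x * (w x - aE x)) μ := by
        refine (hIw.sub hInt_aE).congr (Filter.Eventually.of_forall fun x => ?_)
        show φc x * w x - φc x * aE x = φc x * (w x - aE x)
        ring
      have hsplit : (∫ x in U, φc x * w x)
          = (∫ x in U, φc x * (w x - aE x)) + ∫ x in U, φc x * aE x := by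
        rw [← integral_add hsub hInt_aE]
        refine integral_congr_ae (Filter.Eventually.of_forall fun x => ?_)
        show φc x * w x = φc x * (w x - aE x) + φc x * aE x
        ring
      rw [hsplit, hzero_aE, add_zero]
      refine (norm_integral_le_integral_norm _).trans ?_
      have hptb : ∀ᵐ x ∂μ, ‖φc x * (w x - aE x)‖ ≤ ‖φc x‖ * δ' := by
        have hmem : ∀ᵐ x ∂μ, x ∈ U := by
          rw [hμ, hU]
          exact ae_restrict_mem measurableSet_ball
        filter_upwards [hmem] with x hx
        rw [norm_mul]
        refine mul_le_mul_of_nonneg_left ?_ (norm_nonneg _)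
        exact hc x (hball_sub hx)
      calc (∫ x in U, ‖φc x * (w x - aE x)‖)
          ≤ ∫ x in U, ‖φc x‖ * δ' := by
            exact integral_mono_of_nonneg
              (Filter.Eventually.of_forall fun x => norm_nonneg _)
              (hφ1.norm.mul_const _) hptb
        _ = A * δ' := by rw [integral_mul_const, ← hA]
    -- put the estimates together
    have hfinal : ‖ψL‖ ^ 2 ≤ ‖ψL‖ * ε₁ + A * δ' := by
      have h1 : (inner ℂ ψL ψL : ℂ) = (inner ℂ ψL (ψL - W) : ℂ) + (inner ℂ ψL W : ℂ) := by
        rw [inner_sub_right]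
        ring
      have h2 : ‖ψL‖ ^ 2 = RCLike.re (inner ℂ ψL ψL : ℂ) := by
        rw [← inner_self_eq_norm_sq (𝕜 := ℂ)]
      rw [h2, h1]
      calc RCLike.re ((inner ℂ ψL (ψL - W) : ℂ) + (inner ℂ ψL W : ℂ))
          ≤ ‖(inner ℂ ψL (ψL - W) : ℂ) + (inner ℂ ψL W : ℂ)‖ := RCLike.re_le_norm _
        _ ≤ ‖(inner ℂ ψL (ψL - W) : ℂ)‖ + ‖(inner ℂ ψL W : ℂ)‖ := norm_add_le _ _
        _ ≤ ‖ψL‖ * ε₁ + A * δ' := by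
            refine add_le_add hinner1 ?_
            rw [hWint]
            exact hsmall
    have hb1 : ‖ψL‖ * ε₁ ≤ ε / 2 := by
      rw [hε₁def]
      exact half_bound (norm_nonneg _) hε
    have hb2 : A * δ' ≤ ε / 2 := by
      rw [hδ'def]
      exact half_bound hA0 hε
    linarith
  -- conclude
  have h0 : ‖ψL‖ ^ 2 ≤ 0 := le_of_forall_pos_le_add fun ε hε => by
    simpa using hsq ε hε
  have h1 : ‖ψL‖ ^ 2 = 0 := le_antisymm h0 (by positivity)
  have h2 : ‖ψL‖ = 0 := by
    nlinarith [norm_nonneg ψL]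
  exact norm_eq_zero.mp h2

end

end BandlimitedAux

open BandlimitedAux

/-- Euclidean analog of Theorem 3.2: restrictions of `ω`-band limited functions
`e_g x = ∫_{‖ξ‖ ≤ ω} g(ξ) e^{i⟨x,ξ⟩} dξ`, `g ∈ L²(B̄(0, ω))`, to any open ball `U`
are dense in `L²(U)`. -/
theorem bandlimited_dense_in_ball (d : ℕ) (hd : 1 ≤ d) (ω : ℝ) (hω : 0 < ω)
    (x₀ : EuclideanSpace ℝ (Fin d)) (R : ℝ) (hR : 0 < R)
    (h : EuclideanSpace ℝ (Fin d) → ℂ)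
    (hh : MemLp h 2 (volume.restrict (ball x₀ R)))
    (ε : ℝ) (hε : 0 < ε) :
    ∃ g : EuclideanSpace ℝ (Fin d) → ℂ,
      MemLp g 2 (volume.restrict (closedBall (0 : EuclideanSpace ℝ (Fin d)) ω)) ∧
      ∫ x in ball x₀ R,
          ‖h x - ∫ ξ in closedBall (0 : EuclideanSpace ℝ (Fin d)) ω,
              g ξ * Complex.exp (Complex.I * ((inner ℝ x ξ : ℝ) : ℂ))‖ ^ 2 < ε ^ 2 := by
  classical
  set B := closedBall (0 : EuclideanSpace ℝ (Fin d)) ω with hB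
  set U := ball x₀ R with hU
  set μ := volume.restrict U with hμ
  set ν := volume.restrict B with hν
  haveI hfinU : IsFiniteMeasure μ := by
    constructor
    rw [hμ, Measure.restrict_apply_univ]
    exact measure_ball_lt_top
  haveI hfinB : IsFiniteMeasure ν := by
    constructor
    rw [hν, Measure.restrict_apply_univ]
    exact measure_closedBall_lt_top
  -- the set of band-limited elements of `L²(U)`
  set S : Set (Lp ℂ 2 μ) :=
    {v | ∃ g : EuclideanSpace ℝ (Fin d) → ℂ, MemLp g 2 ν ∧
      (v : EuclideanSpace ℝ (Fin d) → ℂ) =ᵐ[μ] T B g} with hS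
  set V : Submodule ℂ (Lp ℂ 2 μ) := Submodule.span ℂ S with hV
  -- every element of the span is itself band-limited
  have hVS : ∀ v ∈ V, v ∈ S := by
    intro v hv
    induction hv using Submodule.span_induction with
    | mem u hu => exact hu
    | zero =>
        refine ⟨0, MemLp.zero, ?_⟩
        filter_upwards [Lp.coeFn_zero (E := ℂ) (p := 2) (μ := μ)] with x hx
        rw [hx]
        exact (T_zero B x).symm
    | add u v hu hv ihu ihv =>
        obtain ⟨g1, hg1, e1⟩ := ihu
        obtain ⟨g2, hg2, e2⟩ := ihv
        refine ⟨g1 + g2, hg1.add hg2, ?_⟩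
        filter_upwards [Lp.coeFn_add u v, e1, e2] with x hx h1 h2
        rw [hx]
        show (u : EuclideanSpace ℝ (Fin d) → ℂ) x + (v : EuclideanSpace ℝ (Fin d) → ℂ) x
          = T B (g1 + g2) x
        rw [h1, h2, T_add (hg1.integrable one_le_two) (hg2.integrable one_le_two)]
    | smul c u hu ihu =>
        obtain ⟨g, hg, e⟩ := ihu
        refine ⟨c • g, hg.const_smul c, ?_⟩
        filter_upwards [Lp.coeFn_smul c u, e] with x hx h1
        rw [hx]
        show c • (u : EuclideanSpace ℝ (Fin d) → ℂ) x = T B (c • g) x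
        rw [h1, T_smul, smul_eq_mul]
  -- the orthogonal complement of V is trivial
  have claim1 : Vᗮ = ⊥ := by
    rw [Submodule.eq_bot_iff]
    intro ψ hψ
    have hO : ∀ u ∈ V, (inner ℂ u ψ : ℂ) = 0 := (Submodule.mem_orthogonal V ψ).mp hψ
    have hψmem : MemLp (ψ : EuclideanSpace ℝ (Fin d) → ℂ) 2 μ := Lp.memLp ψ
    have H : ∀ g : EuclideanSpace ℝ (Fin d) → ℂ, MemLp g 2 ν →
        ∫ x in U, T B g x * (starRingEnd ℂ) ((ψ : EuclideanSpace ℝ (Fin d) → ℂ) x) = 0 := by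
      intro g hg
      have hTm : MemLp (T B g) 2 μ := T_memℒp (hg.integrable one_le_two)
      have huS : hTm.toLp (T B g) ∈ S := ⟨g, hg, hTm.coeFn_toLp⟩
      have h0 := hO _ (Submodule.subset_span huS)
      rw [L2.inner_def] at h0
      have h1 : ∫ x, (starRingEnd ℂ) (T B g x)
          * (ψ : EuclideanSpace ℝ (Fin d) → ℂ) x ∂μ = 0 := by
        rw [← h0]
        refine integral_congr_ae ?_
        filter_upwards [hTm.coeFn_toLp] with x hx
        rw [RCLike.inner_apply', hx]
      have h2 : ∫ x, (starRingEnd ℂ) ((starRingEnd ℂ) (T B g x)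
          * (ψ : EuclideanSpace ℝ (Fin d) → ℂ) x) ∂μ = 0 := by
        rw [integral_conj, h1, map_zero]
      rw [← h2]
      refine integral_congr_ae (Filter.Eventually.of_forall fun x => ?_)
      show T B g x * (starRingEnd ℂ) ((ψ : EuclideanSpace ℝ (Fin d) → ℂ) x)
        = (starRingEnd ℂ) ((starRingEnd ℂ) (T B g x)
            * (ψ : EuclideanSpace ℝ (Fin d) → ℂ) x)
      rw [map_mul, RingHomCompTriple.comp_apply]
      simp
    have hae := dual_vanish ω hω x₀ R hR _ hψmem (by
      intro g hg
      exact H g hg)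
    refine Lp.ext ?_
    refine hae.trans ?_
    exact (Lp.coeFn_zero (E := ℂ) (p := 2) (μ := μ)).symm
  have claim2 : V.topologicalClosure = ⊤ :=
    Submodule.topologicalClosure_eq_top_iff.mpr claim1
  -- approximate h
  set hL := hh.toLp h with hhL
  have hmem : hL ∈ closure (V : Set (Lp ℂ 2 μ)) := by
    have : hL ∈ V.topologicalClosure := by rw [claim2]; exact Submodule.mem_top
    exact this
  obtain ⟨v, hvV, hvdist⟩ := Metric.mem_closure_iff.mp hmem ε hε
  obtain ⟨g, hg, hve⟩ := hVS v hvV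
  refine ⟨g, hg, ?_⟩
  -- identify the inner integral with `T B g`
  have hTeq : ∀ x : EuclideanSpace ℝ (Fin d),
      (∫ ξ in B, g ξ * Complex.exp (Complex.I * ((inner ℝ x ξ : ℝ) : ℂ))) = T B g x := by
    intro x
    refine integral_congr_ae (Filter.Eventually.of_forall fun ξ => ?_)
    show g ξ * Complex.exp (Complex.I * ((inner ℝ x ξ : ℝ) : ℂ)) = g ξ * ker ξ x
    rw [ker_comm ξ x]
    rfl
  have hgoal_eq : (∫ x in U, ‖h x - ∫ ξ in B,
        g ξ * Complex.exp (Complex.I * ((inner ℝ x ξ : ℝ) : ℂ))‖ ^ 2)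
      = ∫ x in U, ‖h x - T B g x‖ ^ 2 := by
    refine integral_congr_ae (Filter.Eventually.of_forall fun x => ?_)
    show ‖h x - ∫ ξ in B, g ξ * Complex.exp (Complex.I * ((inner ℝ x ξ : ℝ) : ℂ))‖ ^ 2
      = ‖h x - T B g x‖ ^ 2
    rw [hTeq x]
  rw [hgoal_eq]
  -- compute the squared distance
  set D := hL - v with hD
  have hDe : (D : EuclideanSpace ℝ (Fin d) → ℂ) =ᵐ[μ] fun x => h x - T B g x := by
    filter_upwards [Lp.coeFn_sub hL v, hh.coeFn_toLp, hve] with x h1 h2 h3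
    rw [h1]
    show (hL : EuclideanSpace ℝ (Fin d) → ℂ) x - (v : EuclideanSpace ℝ (Fin d) → ℂ) x
      = h x - T B g x
    rw [h2, h3]
  have hint_eq : (∫ x in U, ‖h x - T B g x‖ ^ 2)
      = ∫ x, ‖(D : EuclideanSpace ℝ (Fin d) → ℂ) x‖ ^ 2 ∂μ := by
    refine integral_congr_ae ?_
    filter_upwards [hDe] with x hx
    rw [hx]
  have hnorm_eq : (∫ x, ‖(D : EuclideanSpace ℝ (Fin d) → ℂ) x‖ ^ 2 ∂μ) = ‖D‖ ^ 2 := by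
    have h1 : (inner ℂ D D : ℂ) = ∫ x, (inner ℂ ((D : EuclideanSpace ℝ (Fin d) → ℂ) x)
        ((D : EuclideanSpace ℝ (Fin d) → ℂ) x) : ℂ) ∂μ := L2.inner_def D D
    have h2 : ‖D‖ ^ 2 = RCLike.re (inner ℂ D D : ℂ) :=
      (inner_self_eq_norm_sq (𝕜 := ℂ) D).symm
    rw [h2, h1, ← integral_re (L2.integrable_inner D D)]
    refine integral_congr_ae (Filter.Eventually.of_forall fun x => ?_)
    show ‖(D : EuclideanSpace ℝ (Fin d) → ℂ) x‖ ^ 2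
      = RCLike.re (inner ℂ ((D : EuclideanSpace ℝ (Fin d) → ℂ) x)
          ((D : EuclideanSpace ℝ (Fin d) → ℂ) x) : ℂ)
    exact (inner_self_eq_norm_sq (𝕜 := ℂ) _).symm
  rw [hint_eq, hnorm_eq]
  have hdist : ‖D‖ = dist hL v := (dist_eq_norm hL v).symm
  rw [hdist]
  exact pow_lt_pow_left₀ hvdist dist_nonneg (by norm_num)
end
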